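/- Let β ≥ 1 be an integer, let f : [0,1) → ℝ be twice continuously differentiable, and define u(z) = f(|z|²)/|1−z|^{2β} for z ∈ 𝔻. Then for every z ∈ 𝔻, Δu(z) = (P_β f)(|z|²)/|1−z|^{2β} + (Q_β f)(|z|²)/|1−z|^{2(β+1)}. -/

import Mathlib

open Complex Set Filter Topology

/-- The Laplacian `Δu = (1/4)(∂²u/∂x² + ∂²u/∂y²)` of a function `u : ℂ → ℝ`. -/
noncomputable def lap (u : ℂ → ℝ) (z : ℂ) : ℝ :=
  (1 / 4) * (fderiv ℝ (fun w => fderiv ℝ u w 1) z 1 +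
    fderiv ℝ (fun w => fderiv ℝ u w Complex.I) z Complex.I)

/-- `(P_β g)(x) = (1−β)g′(x) + x·g″(x)`, derivatives taken within `[0,1)`. -/
noncomputable def Pop (β : ℕ) (g : ℝ → ℝ) (x : ℝ) : ℝ :=
  ((1 : ℝ) - β) * derivWithin g (Set.Ico 0 1) x +
    x * derivWithin (fun y => derivWithin g (Set.Ico 0 1) y) (Set.Ico 0 1) x

/-- `(Q_β g)(x) = β(β·g(x) + (1−x)g′(x))`, derivative taken within `[0,1)`. -/
noncomputable def Qop (β : ℕ) (g : ℝ → ℝ) (x : ℝ) : ℝ :=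
  (β : ℝ) * ((β : ℝ) * g x + (1 - x) * derivWithin g (Set.Ico 0 1) x)

noncomputable def lcm' (a b : ℝ) : ℂ →L[ℝ] ℝ := a • Complex.reCLM + b • Complex.imCLM

@[simp] lemma lcm'_apply (a b : ℝ) (v : ℂ) : lcm' a b v = a * v.re + b * v.im := by
  simp [lcm']

lemma hasq (w : ℂ) : HasFDerivAt Complex.normSq (lcm' (2*w.re) (2*w.im)) w := by
  have h := ((Complex.reCLM.hasFDerivAt (x := w)).mul (Complex.reCLM.hasFDerivAt)).add
    ((Complex.imCLM.hasFDerivAt (x := w)).mul (Complex.imCLM.hasFDerivAt))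
  have hfun : Complex.normSq = fun v : ℂ =>
      Complex.reCLM v * Complex.reCLM v + Complex.imCLM v * Complex.imCLM v := by
    funext v; simp [Complex.normSq_apply]
  rw [hfun]
  refine h.congr_fderiv ?_
  ext v
  simp [lcm']
  ring

lemma hasp (w : ℂ) :
    HasFDerivAt (fun w : ℂ => Complex.normSq (1 - w)) (lcm' (2*w.re - 2) (2*w.im)) w := by
  have h1 : HasFDerivAt (fun w : ℂ => 1 - w) (-(ContinuousLinearMap.id ℝ ℂ)) w := by
    simpa using (hasFDerivAt_id (𝕜 := ℝ) w).const_sub (1:ℂ)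
  have h := (hasq (1 - w)).comp w h1
  refine h.congr_fderiv ?_
  ext v
  simp [lcm']
  ring

lemma inv_pow_shift (x : ℝ) (hx : x ≠ 0) (k l : ℕ) :
    (x ^ k)⁻¹ = x ^ l * (x ^ (k + l))⁻¹ := by
  rw [pow_add, mul_inv, ← mul_assoc, mul_comm (x ^ l), mul_assoc,
    mul_inv_cancel₀ (pow_ne_zero l hx), mul_one]

lemma comp_within {g : ℝ → ℝ} {c : ℝ} {s : Set ℝ} {F : ℂ → ℝ} {L : ℂ →L[ℝ] ℝ} {w : ℂ}
    (hg : HasDerivWithinAt g c s (F w)) (hF : HasFDerivAt F L w)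
    (hmem : ∀ᶠ y in 𝓝 w, F y ∈ s) :
    HasFDerivAt (fun y => g (F y)) (c • L) w :=
  HasDerivAtFilter.comp_hasFDerivAtFilter hg hF
    ((tendsto_nhdsWithin_iff.2 ⟨hF.continuousAt, hmem⟩).prodMap (tendsto_pure_pure _ _))

set_option maxHeartbeats 2000000 in
theorem stmt7 (β : ℕ) (hβ : 1 ≤ β) (f : ℝ → ℝ)
    (hf : ContDiffOn ℝ 2 f (Set.Ico 0 1)) (z : ℂ) (hz : ‖z‖ < 1) :
    lap (fun w => f (‖w‖ ^ 2) / ‖1 - w‖ ^ (2 * β)) z =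
      Pop β f (‖z‖ ^ 2) / ‖1 - z‖ ^ (2 * β) +
        Qop β f (‖z‖ ^ 2) / ‖1 - z‖ ^ (2 * (β + 1)) := by
  classical
  set g₁ : ℝ → ℝ := derivWithin f (Set.Ico 0 1) with hg₁def
  set g₂ : ℝ → ℝ := derivWithin g₁ (Set.Ico 0 1) with hg₂def
  have hUD : UniqueDiffOn ℝ (Set.Ico (0:ℝ) 1) := uniqueDiffOn_Ico 0 1
  have hfd : ∀ x ∈ Set.Ico (0:ℝ) 1, HasDerivWithinAt f (g₁ x) (Set.Ico 0 1) x :=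
    fun x hx => ((hf.differentiableOn (by norm_num)) x hx).hasDerivWithinAt
  have hg1c : ContDiffOn ℝ 1 g₁ (Set.Ico 0 1) := hf.derivWithin hUD (by norm_num)
  have hg1d : ∀ x ∈ Set.Ico (0:ℝ) 1, HasDerivWithinAt g₁ (g₂ x) (Set.Ico 0 1) x :=
    fun x hx => ((hg1c.differentiableOn one_ne_zero) x hx).hasDerivWithinAt
  set m : ℤ := (β : ℤ) with hm
  -- the function rewritten with normSq and zpow
  have hu : (fun w => f (‖w‖ ^ 2) / ‖1 - w‖ ^ (2 * β))
      = fun w : ℂ => f (Complex.normSq w) * Complex.normSq (1 - w) ^ (-m) := by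
    funext w
    rw [Complex.sq_norm, pow_mul, Complex.sq_norm, div_eq_mul_inv, hm, zpow_neg, zpow_natCast]
  have hmem : ∀ w : ℂ, Complex.normSq w < 1 → ∀ᶠ y in 𝓝 w, Complex.normSq y ∈ Set.Ico (0:ℝ) 1 := by
    intro w hw
    have hcont : ContinuousAt Complex.normSq w := Complex.continuous_normSq.continuousAt
    filter_upwards [hcont.eventually (eventually_lt_nhds hw)] with y hy
      using ⟨Complex.normSq_nonneg y, hy⟩
  have hp0 : ∀ w : ℂ, Complex.normSq w < 1 → Complex.normSq (1 - w) ≠ 0 := by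
    intro w hw h
    rw [Complex.normSq_eq_zero, sub_eq_zero] at h
    rw [← h] at hw
    simp at hw
  have hqmem : ∀ w : ℂ, Complex.normSq w < 1 → Complex.normSq w ∈ Set.Ico (0:ℝ) 1 :=
    fun w hw => ⟨Complex.normSq_nonneg w, hw⟩
  -- first derivatives of the pieces, at any point of the disc
  have hfq : ∀ w : ℂ, Complex.normSq w < 1 →
      HasFDerivAt (fun w : ℂ => f (Complex.normSq w))
        (g₁ (Complex.normSq w) • lcm' (2*w.re) (2*w.im)) w :=
    fun w hw => comp_within (hfd _ (hqmem w hw)) (hasq w) (hmem w hw)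
  have hg1q : ∀ w : ℂ, Complex.normSq w < 1 →
      HasFDerivAt (fun w : ℂ => g₁ (Complex.normSq w))
        (g₂ (Complex.normSq w) • lcm' (2*w.re) (2*w.im)) w :=
    fun w hw => comp_within (hg1d _ (hqmem w hw)) (hasq w) (hmem w hw)
  have hpk : ∀ (k : ℤ) (w : ℂ), Complex.normSq w < 1 →
      HasFDerivAt (fun w : ℂ => Complex.normSq (1 - w) ^ k)
        (((k : ℝ) * Complex.normSq (1 - w) ^ (k - 1)) • lcm' (2*w.re - 2) (2*w.im)) w :=
    fun k w hw => by
      have := (hasDerivAt_zpow k (Complex.normSq (1 - w)) (Or.inl (hp0 w hw))).comp_hasFDerivAt w (hasp w)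
      exact this
  -- derivative of u₀
  have hU : ∀ w : ℂ, Complex.normSq w < 1 →
      HasFDerivAt (fun w : ℂ => f (Complex.normSq w) * Complex.normSq (1 - w) ^ (-m))
        (f (Complex.normSq w) •
            ((((-m : ℤ) : ℝ) * Complex.normSq (1 - w) ^ (-m - 1)) • lcm' (2*w.re - 2) (2*w.im)) +
          (Complex.normSq (1 - w) ^ (-m)) •
            (g₁ (Complex.normSq w) • lcm' (2*w.re) (2*w.im))) w :=
    fun w hw => (hfq w hw).mul (hpk (-m) w hw)
  -- explicit formulas for the two partial derivatives on the disc
  have hd1 : ∀ w : ℂ, Complex.normSq w < 1 →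
      fderiv ℝ (fun w : ℂ => f (Complex.normSq w) * Complex.normSq (1 - w) ^ (-m)) w 1 =
        f (Complex.normSq w) * ((-(m:ℝ)) * Complex.normSq (1 - w) ^ (-m - 1) * (2*w.re - 2)) +
          Complex.normSq (1 - w) ^ (-m) * (g₁ (Complex.normSq w) * (2*w.re)) := by
    intro w hw
    rw [(hU w hw).fderiv]
    simp
  have hdI : ∀ w : ℂ, Complex.normSq w < 1 →
      fderiv ℝ (fun w : ℂ => f (Complex.normSq w) * Complex.normSq (1 - w) ^ (-m)) w Complex.I =
        f (Complex.normSq w) * ((-(m:ℝ)) * Complex.normSq (1 - w) ^ (-m - 1) * (2*w.im)) +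
          Complex.normSq (1 - w) ^ (-m) * (g₁ (Complex.normSq w) * (2*w.im)) := by
    intro w hw
    rw [(hU w hw).fderiv]
    simp
  have hz' : Complex.normSq z < 1 := by
    rw [← Complex.sq_norm]
    nlinarith [norm_nonneg z]
  have hnhds : ∀ᶠ w in 𝓝 z, Complex.normSq w < 1 :=
    Complex.continuous_normSq.continuousAt.eventually (eventually_lt_nhds hz')
  -- second derivative, direction 1
  have hre2 : HasFDerivAt (fun w : ℂ => 2*w.re) ((2:ℝ) • Complex.reCLM) z :=
    Complex.reCLM.hasFDerivAt.const_mul 2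
  have hre2' : HasFDerivAt (fun w : ℂ => 2*w.re - 2) ((2:ℝ) • Complex.reCLM) z :=
    hre2.sub_const 2
  have him2 : HasFDerivAt (fun w : ℂ => 2*w.im) ((2:ℝ) • Complex.imCLM) z :=
    Complex.imCLM.hasFDerivAt.const_mul 2
  have hA : HasFDerivAt (fun w : ℂ =>
        f (Complex.normSq w) * ((-(m:ℝ)) * Complex.normSq (1 - w) ^ (-m - 1) * (2*w.re - 2)) +
          Complex.normSq (1 - w) ^ (-m) * (g₁ (Complex.normSq w) * (2*w.re))) _ z :=
    ((hfq z hz').mul ((((hpk (-m-1) z hz').const_mul (-(m:ℝ))).mul hre2'))).add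
      ((hpk (-m) z hz').mul ((hg1q z hz').mul hre2))
  have hB : HasFDerivAt (fun w : ℂ =>
        f (Complex.normSq w) * ((-(m:ℝ)) * Complex.normSq (1 - w) ^ (-m - 1) * (2*w.im)) +
          Complex.normSq (1 - w) ^ (-m) * (g₁ (Complex.normSq w) * (2*w.im))) _ z :=
    ((hfq z hz').mul ((((hpk (-m-1) z hz').const_mul (-(m:ℝ))).mul him2))).add
      ((hpk (-m) z hz').mul ((hg1q z hz').mul him2))
  rw [lap, hu]
  have he1 : (fun w : ℂ => fderiv ℝ (fun w : ℂ => f (Complex.normSq w) * Complex.normSq (1 - w) ^ (-m)) w 1)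
      =ᶠ[𝓝 z] fun w : ℂ =>
        f (Complex.normSq w) * ((-(m:ℝ)) * Complex.normSq (1 - w) ^ (-m - 1) * (2*w.re - 2)) +
          Complex.normSq (1 - w) ^ (-m) * (g₁ (Complex.normSq w) * (2*w.re)) := by
    filter_upwards [hnhds] with w hw using hd1 w hw
  have heI : (fun w : ℂ => fderiv ℝ (fun w : ℂ => f (Complex.normSq w) * Complex.normSq (1 - w) ^ (-m)) w Complex.I)
      =ᶠ[𝓝 z] fun w : ℂ =>
        f (Complex.normSq w) * ((-(m:ℝ)) * Complex.normSq (1 - w) ^ (-m - 1) * (2*w.im)) +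
          Complex.normSq (1 - w) ^ (-m) * (g₁ (Complex.normSq w) * (2*w.im)) := by
    filter_upwards [hnhds] with w hw using hdI w hw
  rw [he1.fderiv_eq, heI.fderiv_eq, hA.fderiv, hB.fderiv]
  -- now everything is explicit; final algebra
  have hzrw : ∀ n : ℕ, ‖1 - z‖ ^ (2 * n) = Complex.normSq (1 - z) ^ n := by
    intro n; rw [pow_mul, Complex.sq_norm]
  rw [Pop, Qop, Complex.sq_norm, hzrw, hzrw, ← hg₁def, ← hg₂def]
  have hp : Complex.normSq (1 - z) ≠ 0 := hp0 z hz'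
  have hrq : Complex.normSq z = z.re^2 + z.im^2 := by
    rw [Complex.normSq_apply]; ring
  have hpq : Complex.normSq (1 - z) = 1 - 2*z.re + Complex.normSq z := by
    simp [Complex.normSq_apply]; ring
  have hz1 : Complex.normSq (1 - z) ^ (-m) = (Complex.normSq (1 - z) ^ β)⁻¹ := by
    rw [hm, zpow_neg, zpow_natCast]
  have hz2 : Complex.normSq (1 - z) ^ (-m - 1) = (Complex.normSq (1 - z) ^ (β + 1))⁻¹ := by
    rw [hm, show -(β:ℤ) - 1 = -((β+1 : ℕ) : ℤ) by push_cast; ring, zpow_neg, zpow_natCast]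
  have hz3 : Complex.normSq (1 - z) ^ (-m - 1 - 1) = (Complex.normSq (1 - z) ^ (β + 2))⁻¹ := by
    rw [hm, show -(β:ℤ) - 1 - 1 = -((β+2 : ℕ) : ℤ) by push_cast; ring, zpow_neg, zpow_natCast]
  have hz4 : Complex.normSq (1 - z) ^ (-m - 1) = (Complex.normSq (1 - z) ^ (β + 1))⁻¹ := hz2
  simp only [ContinuousLinearMap.add_apply, ContinuousLinearMap.coe_smul',
    Pi.smul_apply, lcm'_apply, smul_eq_mul, Complex.one_re, Complex.one_im,
    Complex.I_re, Complex.I_im, ContinuousLinearMap.coe_sub', Pi.sub_apply,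
    Complex.reCLM_apply, Complex.imCLM_apply, Pi.mul_apply]
  have e1 : (Complex.normSq (1-z) ^ β)⁻¹
      = Complex.normSq (1-z)^2 * (Complex.normSq (1-z) ^ (β+2))⁻¹ :=
    inv_pow_shift _ hp β 2
  have e2 : (Complex.normSq (1-z) ^ (β+1))⁻¹
      = Complex.normSq (1-z) * (Complex.normSq (1-z) ^ (β+2))⁻¹ := by
    simpa using inv_pow_shift _ hp (β+1) 1
  simp only [div_eq_mul_inv]
  rw [hz1, hz2, hz3, e1, e2]
  generalize (Complex.normSq (1-z) ^ (β+2))⁻¹ = j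
  rw [hpq, hrq, hm]
  push_cast
  ring
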